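/- Let f₁,…,f_N : ℝ^d → ℝ be differentiable and define the augmented cost f̃(x) := (ν/2)·xᵀ(I − (1/N)𝟙𝟙ᵀ)x + N·∑_{i=1}^N f_i((1/N)∑_{j=1}^N x_j) on ℝ^{Nd}, where ν > 0 and 𝟙 denotes the stacked identity 1_N ⊗ I_d. Then a point x* ∈ ℝ^d is a stationary point of ∑_{i=1}^N f_i (i.e. ∑_i ∇f_i(x*) = 0) if and only if the consensual point 𝟙x* := (x*,…,x*) ∈ ℝ^{Nd} is a stationary point of f̃. -/

import Mathlib

open scoped BigOperators
open InnerProductSpace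

noncomputable section

theorem stmt0 (N d : ℕ) (hN : 0 < N) (ν : ℝ) (hν : 0 < ν)
    (f : Fin N → EuclideanSpace ℝ (Fin d) → ℝ)
    (hf : ∀ i, Differentiable ℝ (f i))
    (ftilde : PiLp 2 (fun _ : Fin N => EuclideanSpace ℝ (Fin d)) → ℝ)
    (hft : ftilde = fun x =>
      ν / 2 * ∑ i, ‖x i - (N : ℝ)⁻¹ • ∑ j, x j‖ ^ 2
        + (N : ℝ) * ∑ i, f i ((N : ℝ)⁻¹ • ∑ j, x j))
    (xstar : EuclideanSpace ℝ (Fin d)) :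
    (∑ i, gradient (f i) xstar = 0) ↔
      gradient ftilde
        ((WithLp.equiv 2 (∀ _ : Fin N, EuclideanSpace ℝ (Fin d))).symm
          (fun _ => xstar)) = 0 := by
  classical
  let E := EuclideanSpace ℝ (Fin d)
  let X := PiLp 2 (fun _ : Fin N => E)
  let xbar : X := (WithLp.equiv 2 (∀ _ : Fin N, E)).symm (fun _ => xstar)
  have hxbar_apply : ∀ i, xbar i = xstar := fun i => rfl
  let S : E := ∑ i, gradient (f i) xstar
  let G : X := (WithLp.equiv 2 (∀ _ : Fin N, E)).symm (fun _ => S)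
  let P : Fin N → (X →L[ℝ] E) := fun j =>
    (ContinuousLinearMap.proj j).comp
      (PiLp.continuousLinearEquiv 2 ℝ (fun _ : Fin N => E)).toContinuousLinearMap
  have hP : ∀ j (x : X), P j x = x j := fun j x => rfl
  let L : X →L[ℝ] E := (N : ℝ)⁻¹ • ∑ j, P j
  have hL : ∀ x : X, L x = (N : ℝ)⁻¹ • ∑ j, x j := by
    intro x
    simp [L, ContinuousLinearMap.sum_apply, hP]
  have hLxbar : L xbar = xstar := by
    rw [hL]
    simp only [hxbar_apply, Finset.sum_const, Finset.card_univ, Fintype.card_fin]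
    rw [← Nat.cast_smul_eq_nsmul ℝ, smul_smul, inv_mul_cancel₀ (by exact_mod_cast hN.ne')]
    simp
  have havg : HasFDerivAt (fun x : X => (N : ℝ)⁻¹ • ∑ j, x j) L xbar := by
    have := L.hasFDerivAt (x := xbar)
    apply this.congr_of_eventuallyEq
    filter_upwards with x using (hL x).symm
  -- quadratic term has derivative 0 at xbar
  have hquad : HasFDerivAt (fun x : X => ν / 2 * ∑ i, ‖x i - (N : ℝ)⁻¹ • ∑ j, x j‖ ^ 2)
      (0 : X →L[ℝ] ℝ) xbar := by
    have hterm : ∀ i : Fin N, HasFDerivAt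
        (fun x : X => ‖x i - (N : ℝ)⁻¹ • ∑ j, x j‖ ^ 2) (0 : X →L[ℝ] ℝ) xbar := by
      intro i
      have hT : HasFDerivAt (fun x : X => x i - (N : ℝ)⁻¹ • ∑ j, x j) (P i - L) xbar :=
        ((P i).hasFDerivAt).sub havg
      have hval : xbar i - (N : ℝ)⁻¹ • ∑ j, xbar j = 0 := by
        rw [← hL, hLxbar, hxbar_apply, sub_self]
      have key := hT.inner ℝ hT
      have key0 : HasFDerivAt
          (fun x : X => (inner ℝ (x i - (N : ℝ)⁻¹ • ∑ j, x j) (x i - (N : ℝ)⁻¹ • ∑ j, x j) : ℝ))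
          (0 : X →L[ℝ] ℝ) xbar := by
        refine key.congr_fderiv (Eq.symm ?_)
        ext v
        simp [fderivInnerCLM_apply, hval]
      simpa only [real_inner_self_eq_norm_sq] using key0
    have hsum := HasFDerivAt.fun_sum (fun i (_ : i ∈ Finset.univ) => hterm i)
    have := hsum.const_mul (ν / 2)
    simpa using this
  -- second term
  have hsecond : HasFDerivAt (fun x : X => (N : ℝ) * ∑ i, f i ((N : ℝ)⁻¹ • ∑ j, x j))
      ((toDual ℝ X) G) xbar := by
    have hterm : ∀ i : Fin N, HasFDerivAt (fun x : X => f i ((N : ℝ)⁻¹ • ∑ j, x j))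
        (((toDual ℝ E) (gradient (f i) xstar)).comp L) xbar := by
      intro i
      have hgi : HasFDerivAt (f i) ((toDual ℝ E) (gradient (f i) xstar)) xstar :=
        ((hf i) xstar).hasGradientAt.hasFDerivAt
      have hx : ((N : ℝ)⁻¹ • ∑ j, xbar j) = xstar := by rw [← hL, hLxbar]
      have hgi' : HasFDerivAt (f i) ((toDual ℝ E) (gradient (f i) xstar))
          ((N : ℝ)⁻¹ • ∑ j, xbar j) := by rw [hx]; exact hgi
      exact hgi'.comp xbar havg
    have hsum := HasFDerivAt.fun_sum (fun i (_ : i ∈ Finset.univ) => hterm i)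
    have hmul := hsum.const_mul (N : ℝ)
    refine hmul.congr_fderiv (Eq.symm ?_)
    ext v
    simp only [ContinuousLinearMap.smul_apply, ContinuousLinearMap.sum_apply,
      ContinuousLinearMap.comp_apply, toDual_apply_apply, smul_eq_mul]
    rw [PiLp.inner_apply]
    have h1 : ∀ i : Fin N, (inner ℝ (gradient (f i) xstar) (L v) : ℝ)
        = (N : ℝ)⁻¹ * inner ℝ (gradient (f i) xstar) (∑ j, v j) := by
      intro i; rw [hL, real_inner_smul_right]
    simp only [h1, ← Finset.mul_sum]
    rw [← mul_assoc, mul_inv_cancel₀ (by exact_mod_cast hN.ne'), one_mul]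
    rw [← sum_inner]
    have h2 : ∀ j : Fin N, (inner ℝ (G j) (v j) : ℝ) = inner ℝ S (v j) := fun j => rfl
    simp only [h2]
    rw [← inner_sum]
  have hft' : HasGradientAt ftilde G xbar := by
    rw [hasGradientAt_iff_hasFDerivAt, hft]
    simpa using hquad.fun_add hsecond
  rw [hft'.gradient]
  constructor
  · intro h
    refine PiLp.ext fun j => ?_
    show S = 0
    exact h
  · intro h
    exact congrFun (congrArg WithLp.ofLp h) ⟨0, hN⟩
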